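/- arXiv:2104.01828 — 3 statements merged into one kernel-verified Lean document; each statement's English description precedes it below -/
import Mathlib

section
/- With ε = β/(2(2N−1)), we have (r − ε)K + N·L > n/2, where n = K + N·L + M and r = 1/2 − β. That is, if at least (r−ε)K of the K isolated voters vote correctly, the additional N·L element voters voting correctly suffices for a strict weighted majority. -/
/-- Lemma "enough": with `ε = β/(2(2N−1))`, we have `(r − ε)K + N·L > n/2`. -/
theorem stmt_1 (β : ℝ) (hβ : 0 < β ∧ β < 1/2) (N M : ℕ) (hN0 : 0 < N) (hM0 : 0 < M)
    (r ε K L n : ℝ)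
    (hr : r = 1/2 - β)
    (hε : ε = β / (2 * (2 * N - 1)))
    (hK : K = 8 * N ^ 2 * M / β ^ 2)
    (hL : L = ⌊β * (4 * N - 1) * K / (N * (2 * N - 1)) + M / N⌋ + 1)
    (hn : n = K + N * L + M) :
    (r - ε) * K + N * L > n / 2 := by
  obtain ⟨hβ0, hβ2⟩ := hβ
  have hN1 : (1:ℝ) ≤ N := by exact_mod_cast hN0
  have hd : (0:ℝ) < 2*N - 1 := by linarith
  have hNpos : (0:ℝ) < N := by linarith
  have hx : L > β * (4 * N - 1) * K / (N * (2 * N - 1)) + M / N := by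
    rw [hL]; exact Int.lt_floor_add_one _
  have hNx : (N:ℝ) * (β * (4 * N - 1) * K / (N * (2 * N - 1)) + M / N)
      = (2*β + 2*ε) * K + M := by
    rw [hε]; have hd' : ((N:ℝ)*2 - 1) ≠ 0 := (by linarith : (0:ℝ) < N*2 - 1).ne'; field_simp; ring
  have hNL : (N:ℝ) * L > (2*β + 2*ε) * K + M := by
    rw [← hNx]; exact (mul_lt_mul_iff_right₀ hNpos).2 hx
  rw [hn, hr]
  linarith
end

section
/- With ε = β/(2(2N−1)), for any K' with K ≤ K' ≤ n, we have (β − ε)K' > ((N−1)L + M)/2. Consequently if at most (r+ε)K' of K' voters vote correctly, then even (N−1)L + M additional correct votes cannot reach a majority of n. -/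
/-- Lemma "not enough": with `ε = β/(2(2N−1))`, for any `K'` with `K ≤ K' ≤ n`,
`(β − ε)K' > ((N−1)L + M)/2`. -/
theorem stmt_2 (β : ℝ) (hβ : 0 < β ∧ β < 1/2) (N M : ℕ) (hN0 : 0 < N) (hM0 : 0 < M)
    (r ε K L n : ℝ)
    (hr : r = 1/2 - β)
    (hε : ε = β / (2 * (2 * N - 1)))
    (hK : K = 8 * N ^ 2 * M / β ^ 2)
    (hKbig : β * K / (2 * N) ≥ (4 / β) * N * M)
    (hL : L = ⌊β * (4 * N - 1) * K / (N * (2 * N - 1)) + M / N⌋ + 1)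
    (hn : n = K + N * L + M) :
    ∀ K' : ℝ, K ≤ K' → K' ≤ n → (β - ε) * K' > ((N - 1) * L + M) / 2 := by
  obtain ⟨hβ0, hβh⟩ := hβ
  have hN1 : (1:ℝ) ≤ (N:ℝ) := by exact_mod_cast hN0
  have hM1 : (1:ℝ) ≤ (M:ℝ) := by exact_mod_cast hM0
  have hNpos : (0:ℝ) < (N:ℝ) := by linarith
  have hd : (0:ℝ) < 2*(N:ℝ) - 1 := by linarith
  -- β*K > 16 N² M
  have hA : β * K > 16 * (N:ℝ)^2 * M := by
    have h1 : (4 / β) * N * M * (2*(N:ℝ)) ≤ β * K := by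
      exact (le_div_iff₀ (by linarith : (0:ℝ) < 2*(N:ℝ))).mp hKbig
    have h2 : (4 / β) * N * M * (2*(N:ℝ)) = 8 * (N:ℝ)^2 * M / β := by ring
    rw [h2] at h1
    have h3 : 16 * (N:ℝ)^2 * M < 8 * (N:ℝ)^2 * M / β := by
      rw [lt_div_iff₀ hβ0]
      nlinarith [mul_pos (mul_pos (by positivity : (0:ℝ) < (N:ℝ)^2) (by linarith : (0:ℝ) < (M:ℝ))) hβ0]
    linarith
  have hbe : β - ε = β * (4*(N:ℝ) - 3) / (2 * (2*(N:ℝ) - 1)) := by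
    rw [hε]; field_simp; ring
  have hbe0 : 0 < β - ε := by
    rw [hbe]
    apply div_pos (by nlinarith) (by linarith)
  have hLle : L ≤ β*(4*(N:ℝ)-1)*K/((N:ℝ)*(2*(N:ℝ)-1)) + (M:ℝ)/(N:ℝ) + 1 := by
    rw [hL]
    have := Int.floor_le (β*(4*(N:ℝ)-1)*K/((N:ℝ)*(2*(N:ℝ)-1)) + (M:ℝ)/(N:ℝ))
    push_cast
    linarith
  have step : ((N:ℝ)-1)*(β*(4*(N:ℝ)-1)*K/((N:ℝ)*(2*(N:ℝ)-1)) + (M:ℝ)/(N:ℝ) + 1) + (M:ℝ)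
      < 2*((β-ε)*K) := by
    have hne : (N:ℝ) ≠ 0 := ne_of_gt hNpos
    have hdne : 2*(N:ℝ)-1 ≠ 0 := ne_of_gt hd
    rw [← sub_pos]
    have hdiff : 2*((β-ε)*K) - (((N:ℝ)-1)*(β*(4*(N:ℝ)-1)*K/((N:ℝ)*(2*(N:ℝ)-1)) + (M:ℝ)/(N:ℝ) + 1) + (M:ℝ))
        = (β*K - (((N:ℝ)-1)*(M:ℝ) + (N:ℝ)*((N:ℝ)-1) + (N:ℝ)*(M:ℝ)))/(N:ℝ) := by
      rw [hbe]; field_simp; ring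
    rw [hdiff]
    apply div_pos _ hNpos
    nlinarith [mul_le_mul_of_nonneg_left hM1 (le_of_lt hNpos),
      mul_le_mul_of_nonneg_left hM1 (mul_nonneg (le_of_lt hNpos) (le_of_lt hNpos))]
  intro K' hK' _
  have hL2 : ((N:ℝ)-1)*L ≤ ((N:ℝ)-1)*(β*(4*(N:ℝ)-1)*K/((N:ℝ)*(2*(N:ℝ)-1)) + (M:ℝ)/(N:ℝ) + 1) :=
    mul_le_mul_of_nonneg_left hLle (by linarith)
  have h5 : (β-ε)*K ≤ (β-ε)*K' := mul_le_mul_of_nonneg_left hK' (le_of_lt hbe0)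
  linarith
end

section
/- For any odd n and q ∈ [0, 1/2], the probability that a Binomial(n, q) random variable exceeds n/2 is at most q. That is, Σ_{k > n/2} C(n,k) q^k (1−q)^{n−k} ≤ q. -/
open Finset

lemma pow_flip_le (q : ℝ) (h0 : 0 ≤ q) (h1 : q ≤ 1/2) {a b : ℕ} (hab : a ≤ b) :
    q ^ b * (1 - q) ^ a ≤ q ^ a * (1 - q) ^ b := by
  have hq : q ≤ 1 - q := by linarith
  have h1q : (0:ℝ) ≤ 1 - q := by linarith
  have h2 : q ^ (b - a) ≤ (1 - q) ^ (b - a) := pow_le_pow_left₀ h0 hq _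
  have ha := pow_nonneg h0 a
  have hb := pow_nonneg h1q a
  calc q ^ b * (1-q)^a = q^a * q^(b-a) * (1-q)^a := by
        rw [← pow_add]; congr 2; omega
    _ ≤ q^a * (1-q)^(b-a) * (1-q)^a :=
        mul_le_mul_of_nonneg_right (mul_le_mul_of_nonneg_left h2 ha) hb
    _ = q^a * (1-q)^b := by rw [mul_assoc, ← pow_add]; congr 2; omega

/-- For odd `n` and `q ∈ [0, 1/2]`, the probability that a `Binomial(n, q)` variable exceeds
`n/2` is at most `q`: the expert rule dominates direct majority voting. -/
theorem stmt_14 (n : ℕ) (hodd : Odd n) (q : ℝ) (h0 : 0 ≤ q) (h1 : q ≤ 1/2) :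
    (∑ k ∈ Finset.range (n + 1),
      if 2 * k > n then (n.choose k : ℝ) * q ^ k * (1 - q) ^ (n - k) else 0) ≤ q := by
  obtain ⟨m, rfl⟩ := hodd
  have h1q : (0:ℝ) ≤ 1 - q := by linarith
  -- Step 1: reduce the if-sum to a sum over the top half, reindexed by range (m+1)
  have key : (∑ k ∈ Finset.range (2*m+1 + 1),
      if 2 * k > 2*m+1 then ((2*m+1).choose k : ℝ) * q ^ k * (1 - q) ^ (2*m+1 - k) else 0)
      = ∑ i ∈ Finset.range (m+1),
          ((2*m+1).choose (m+1+i) : ℝ) * q ^ (m+1+i) * (1 - q) ^ (m - i) := by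
    conv_lhs => rw [Finset.range_eq_Ico,
      ← Finset.sum_Ico_consecutive _ (Nat.zero_le (m+1)) (by omega : m+1 ≤ 2*m+1+1),
      Finset.sum_Ico_eq_sum_range, Finset.sum_Ico_eq_sum_range]
    have hz : ∀ i ∈ Finset.range (m+1-0),
        (if 2 * (0+i) > 2*m+1 then ((2*m+1).choose (0+i):ℝ) * q^(0+i) * (1-q)^(2*m+1-(0+i)) else 0) = 0 := by
      intro i hi
      simp only [Finset.mem_range] at hi
      rw [if_neg (by omega)]
    rw [Finset.sum_congr rfl hz]
    simp only [Finset.sum_const_zero, zero_add]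
    rw [show 2*m+1+1 - (m+1) = m+1 by omega]
    apply Finset.sum_congr rfl
    intro i hi
    simp only [Finset.mem_range] at hi
    rw [if_pos (by omega), show 2*m+1-(m+1+i) = m - i by omega]
  rw [key]
  -- Step 2: Pascal split
  have pascal : ∀ i ∈ Finset.range (m+1),
      ((2*m+1).choose (m+1+i) : ℝ) * q ^ (m+1+i) * (1 - q) ^ (m - i)
      = ((2*m).choose (m+i) : ℝ) * q ^ (m+1+i) * (1 - q) ^ (m - i)
        + ((2*m).choose (m+1+i) : ℝ) * q ^ (m+1+i) * (1 - q) ^ (m - i) := by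
    intro i _
    have h : (2*m+1).choose (m+1+i) = (2*m).choose (m+i) + (2*m).choose (m+1+i) := by
      rw [show m+1+i = (m+i)+1 by ring]
      exact Nat.choose_succ_succ (2*m) (m+i)
    rw [h]
    push_cast
    ring
  rw [Finset.sum_congr rfl pascal, Finset.sum_add_distrib]
  -- RHS: q equals the full binomial sum times q
  have binom : ∑ j ∈ Finset.range (2*m+1), q * (((2*m).choose j : ℝ) * q ^ j * (1-q) ^ (2*m - j)) = q := by
    have h := add_pow q (1-q) (2*m)
    simp only [add_sub_cancel, one_pow] at h
    rw [← Finset.mul_sum]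
    have h2 : ∑ j ∈ Finset.range (2*m+1), ((2*m).choose j : ℝ) * q ^ j * (1-q) ^ (2*m - j)
        = ∑ j ∈ Finset.range (2*m+1), q ^ j * (1-q) ^ (2*m - j) * ((2*m).choose j : ℝ) := by
      apply Finset.sum_congr rfl; intro j _; ring
    rw [h2, ← h, mul_one]
  refine le_trans ?_ (le_of_eq binom)
  -- split the RHS sum at m
  conv_rhs => rw [Finset.range_eq_Ico,
    ← Finset.sum_Ico_consecutive _ (Nat.zero_le m) (by omega : m ≤ 2*m+1)]
  rw [add_comm (∑ j ∈ Finset.Ico 0 m, _)]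
  apply add_le_add
  · -- A part: exact equality with top half
    apply le_of_eq
    rw [Finset.sum_Ico_eq_sum_range, show 2*m+1 - m = m+1 by omega]
    apply Finset.sum_congr rfl
    intro i hi
    simp only [Finset.mem_range] at hi
    rw [show 2*m - (m + i) = m - i by omega, show m+1+i = (m+i)+1 by ring, pow_succ]
    ring
  · -- B part: termwise bound after reflection
    rw [Finset.sum_range_succ, show (2*m).choose (m+1+m) = 0 from
      Nat.choose_eq_zero_of_lt (by omega)]
    push_cast
    simp only [zero_mul, add_zero]
    rw [← Finset.sum_range_reflect]
    rw [← Finset.range_eq_Ico]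
    apply Finset.sum_le_sum
    intro j hj
    simp only [Finset.mem_range] at hj
    rw [show m+1+(m-1-j) = 2*m - j by omega, show m - (m-1-j) = j+1 by omega,
      Nat.choose_symm (by omega : j ≤ 2*m)]
    have hle := pow_flip_le q h0 h1 (show j+1 ≤ 2*m - j by omega)
    have hc : (0:ℝ) ≤ ((2*m).choose j : ℝ) := Nat.cast_nonneg _
    calc ((2*m).choose j : ℝ) * q^(2*m-j) * (1-q)^(j+1)
        = ((2*m).choose j : ℝ) * (q^(2*m-j) * (1-q)^(j+1)) := by ring
      _ ≤ ((2*m).choose j : ℝ) * (q^(j+1) * (1-q)^(2*m-j)) :=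
          mul_le_mul_of_nonneg_left hle hc
      _ = q * (((2*m).choose j : ℝ) * q^j * (1-q)^(2*m-j)) := by rw [pow_succ]; ring
end
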